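/- arXiv:1009.0895 — 3 statements merged into one kernel-verified Lean document; each statement's English description precedes it below -/
import Mathlib

section
/- Let n ≥ 1, let 1 ≤ p, q ≤ ∞ with p < q, and s ∈ ℝ. Suppose there exists C > 0 such that ‖{c_k}‖_{ℓ^p(ℤ^n)} ≤ C‖{(1+|k|)^s c_k}‖_{ℓ^q(ℤ^n)} for all finitely supported complex sequences {c_k}_{k∈ℤ^n}. Then s > n(1/p − 1/q). -/
noncomputable section

open MeasureTheory Real ENNReal

abbrev En (n : ℕ) : Type := EuclideanSpace ℝ (Fin n)
abbrev Zn (n : ℕ) : Type := Fin n → ℤ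

def zc {n : ℕ} (k : Zn n) : En n := WithLp.toLp 2 (fun i => (k i : ℝ))

/-- Fourier transform `f̂(ξ) = ∫ f(x) e^{-i x·ξ} dx`. -/
def FT {n : ℕ} (f : En n → ℂ) (ξ : En n) : ℂ :=
  ∫ x : En n, f x * Complex.exp (-(Complex.I * ((inner ℝ x ξ : ℝ) : ℂ)))

/-- Inverse Fourier transform `g^∨(x) = (2π)^{-n} ∫ g(ξ) e^{i x·ξ} dξ`. -/
def IFT {n : ℕ} (g : En n → ℂ) (x : En n) : ℂ :=
  (((2 * Real.pi) ^ n)⁻¹ : ℝ) • ∫ ξ : En n, g ξ * Complex.exp (Complex.I * ((inner ℝ x ξ : ℝ) : ℂ))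

/-- `ℓ^q` norm (with sup modification when `q = ∞`). -/
def lqNorm {ι : Type*} (q : ℝ≥0∞) (a : ι → ℝ≥0∞) : ℝ≥0∞ :=
  if q = ∞ then ⨆ i, a i else (∑' i, a i ^ q.toReal) ^ (1 / q.toReal)

/-- The weight `⟨k⟩^s = (1+|k|²)^{s/2}`. -/
def jweight {n : ℕ} (s : ℝ) (k : Zn n) : ℝ≥0∞ :=
  ENNReal.ofReal ((1 + ‖zc k‖ ^ 2) ^ (s / 2))

/-- `φ(D-k)f = (φ(·-k) f̂)^∨`. -/
def modPiece {n : ℕ} (φ : En n → ℂ) (f : En n → ℂ) (k : Zn n) : En n → ℂ :=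
  IFT fun ξ => φ (ξ - zc k) * FT f ξ

/-- Modulation space norm `‖f‖_{M^{p,q}_s}`. -/
def modNorm {n : ℕ} (φ : En n → ℂ) (p q : ℝ≥0∞) (s : ℝ) (f : En n → ℂ) : ℝ≥0∞ :=
  lqNorm q fun k : Zn n => jweight s k * eLpNorm (modPiece φ f k) p volume

/-- `L^p`-Sobolev norm `‖f‖_{L^p_s} = ‖(⟨·⟩^s f̂)^∨‖_{L^p}`. -/
def sobNorm {n : ℕ} (p : ℝ≥0∞) (s : ℝ) (f : En n → ℂ) : ℝ≥0∞ :=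
  eLpNorm (IFT fun ξ => ((((1 + ‖ξ‖ ^ 2) ^ (s / 2) : ℝ)) : ℂ) * FT f ξ) p volume

/-- A window `φ ∈ S(ℝⁿ)` with `supp φ ⊆ [-1,1]ⁿ` and `∑_k φ(ξ-k) = 1`. -/
def AdmissibleWindow {n : ℕ} (φ : SchwartzMap (En n) ℂ) : Prop :=
  (Function.support ⇑φ ⊆ {ξ : En n | ∀ i, |ξ i| ≤ 1}) ∧
    ∀ ξ : En n, ∑' k : Zn n, φ (ξ - zc k) = 1

/-- The index `ν₁(p,q)`. -/
def nu1 (p q : ℝ≥0∞) : ℝ :=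
  let a := (1 / p).toReal
  let b := (1 / q).toReal
  if b ≤ min a (1 - a) then 0
  else if 1 - a ≤ min b (1 / 2) then a + b - 1
  else -a + b

/-- The index `ν₂(p,q)`. -/
def nu2 (p q : ℝ≥0∞) : ℝ :=
  let a := (1 / p).toReal
  let b := (1 / q).toReal
  if max a (1 - a) ≤ b then 0
  else if max b (1 / 2) ≤ 1 - a then a + b - 1
  else -a + b

/-- The unimodular Fourier multiplier `e^{i|D|^α}f = (2π)^{-n} ∫ e^{i|ξ|^α} f̂(ξ) e^{ix·ξ} dξ`. -/
def expD {n : ℕ} (α : ℝ) (f : En n → ℂ) : En n → ℂ :=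
  IFT fun ξ => Complex.exp (Complex.I * (((‖ξ‖ ^ α : ℝ)) : ℂ)) * FT f ξ

/-- `φ(D-k)(e^{i|D|^α}f) = (φ(·-k) e^{i|·|^α} f̂)^∨`. -/
def expDPiece {n : ℕ} (φ : En n → ℂ) (α : ℝ) (f : En n → ℂ) (k : Zn n) : En n → ℂ :=
  IFT fun ξ => φ (ξ - zc k) * Complex.exp (Complex.I * (((‖ξ‖ ^ α : ℝ)) : ℂ)) * FT f ξ

/-- Modulation space norm of `e^{i|D|^α}f` (via the distributional Fourier transform). -/
def modNormExp {n : ℕ} (φ : En n → ℂ) (α : ℝ) (p q : ℝ≥0∞) (s : ℝ) (f : En n → ℂ) : ℝ≥0∞ :=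
  lqNorm q fun k : Zn n => jweight s k * eLpNorm (expDPiece φ α f k) p volume

/-- A sequence indexed by `ℤⁿ` is finitely supported. -/
def FinSupp {n : ℕ} (c : Zn n → ℂ) : Prop := (Function.support c).Finite

namespace SeqNec

def box (n J : ℕ) : Finset (Zn n) := Finset.Icc 0 (fun _ => 2^J - 1)

lemma mem_box {n J : ℕ} (k : Zn n) : k ∈ box n J ↔ ∀ i, 0 ≤ k i ∧ k i ≤ 2^J - 1 := by
  simp [box, Finset.mem_Icc, Pi.le_def, forall_and]

lemma card_box (n J : ℕ) : (box n J).card = 2^(J*n) := by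
  simp only [box, Pi.card_Icc, Int.card_Icc, Pi.zero_apply, sub_zero, sub_add_cancel]
  rw [Finset.prod_const, Finset.card_univ, Fintype.card_fin]
  have : ((2:ℤ)^J).toNat = 2^J := by
    rw [show ((2:ℤ)^J) = ((2^J : ℕ) : ℤ) by push_cast; ring, Int.toNat_natCast]
  rw [this, ← pow_mul, mul_comm]

lemma coord_le_norm {n : ℕ} (k : Zn n) (i : Fin n) : |(k i : ℝ)| ≤ ‖zc k‖ := by
  rw [EuclideanSpace.norm_eq]
  calc |(k i:ℝ)| = √((k i:ℝ)^2) := (Real.sqrt_sq_eq_abs _).symm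
  _ ≤ _ := by
      apply Real.sqrt_le_sqrt
      have h : ∀ j, (0:ℝ) ≤ ‖zc k j‖^2 := fun j => sq_nonneg _
      calc ((k i:ℝ))^2 = ‖zc k i‖^2 := by rw [Real.norm_eq_abs, sq_abs]; rfl
      _ ≤ _ := Finset.single_le_sum (fun j _ => h j) (Finset.mem_univ i)

lemma norm_le_of_coord {n : ℕ} (k : Zn n) (M : ℝ) (hM : 0 ≤ M) (h : ∀ i, |(k i : ℝ)| ≤ M) :
    ‖zc k‖ ≤ √n * M := by
  rw [EuclideanSpace.norm_eq]
  have hb : ∑ i, ‖zc k i‖^2 ≤ n * M^2 := by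
    calc ∑ i, ‖zc k i‖^2 ≤ ∑ _i : Fin n, M^2 := by
          apply Finset.sum_le_sum
          intro i _
          have h2 : ‖zc k i‖ ≤ M := by rw [Real.norm_eq_abs]; exact h i
          exact pow_le_pow_left₀ (norm_nonneg _) h2 2
    _ = n * M^2 := by rw [Finset.sum_const, Finset.card_univ, Fintype.card_fin]; ring
  calc √(∑ i, ‖zc k i‖^2) ≤ √(n * M^2) := Real.sqrt_le_sqrt hb
  _ = √n * M := by rw [Real.sqrt_mul (by positivity), Real.sqrt_sq hM]

lemma rpow_neg_anti {x y c : ℝ} (hx : 0 < x) (hxy : x ≤ y) (hc : 0 ≤ c) :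
    y ^ (-c) ≤ x ^ (-c) := by
  rw [Real.rpow_neg (le_of_lt hx), Real.rpow_neg (by linarith)]
  exact inv_anti₀ (Real.rpow_pos_of_pos hx c) (Real.rpow_le_rpow hx.le hxy hc)

lemma box_mono (n J : ℕ) : box n J ⊆ box n (J+1) := by
  apply Finset.Icc_subset_Icc le_rfl
  intro i
  simp only
  have : (2:ℤ)^J ≤ 2^(J+1) := by
    apply pow_le_pow_right₀ (by norm_num) (by omega)
  omega

lemma w_lb {n J : ℕ} (k : Zn n) (hk : k ∈ box n (J+1)) :
    ((1 + 2*√n) * 2^J) ^ (-(n:ℝ)) ≤ (1 + ‖zc k‖) ^ (-(n:ℝ)) := by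
  have h1 : ∀ i, |(k i:ℝ)| ≤ 2^(J+1) := by
    intro i
    obtain ⟨h2, h3⟩ := (mem_box k).1 hk i
    rw [abs_of_nonneg (by exact_mod_cast h2)]
    have : (k i : ℝ) ≤ 2^(J+1) - 1 := by exact_mod_cast h3
    linarith [this]
  have h2 : ‖zc k‖ ≤ √n * 2^(J+1) := norm_le_of_coord k _ (by positivity) h1
  apply rpow_neg_anti (by positivity) _ (by positivity)
  have h3 : (1:ℝ) ≤ 2^J := one_le_pow₀ (by norm_num)
  calc (1:ℝ) + ‖zc k‖ ≤ 1 + √n * 2^(J+1) := by linarith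
  _ = 1 + (2*√n) * 2^J := by ring
  _ ≤ (1 + 2*√n) * 2^J := by nlinarith [Real.sqrt_nonneg (n:ℝ)]

lemma w_ub {n J : ℕ} (k : Zn n) (hk : k ∈ box n (J+1)) (hk' : k ∉ box n J) :
    (1 + ‖zc k‖) ^ (-(n:ℝ)) ≤ ((2:ℝ)^J) ^ (-(n:ℝ)) := by
  obtain ⟨i, hi⟩ : ∃ i, ¬(0 ≤ k i ∧ k i ≤ 2^J - 1) := by
    by_contra hcon
    push_neg at hcon
    exact hk' ((mem_box k).2 fun i => ⟨(hcon i).1, (hcon i).2⟩)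
  have h0 : 0 ≤ k i := ((mem_box k).1 hk i).1
  have h1 : (2:ℤ)^J ≤ k i := by omega
  have h2 : (2:ℝ)^J ≤ ‖zc k‖ := by
    calc (2:ℝ)^J ≤ (k i : ℝ) := by exact_mod_cast h1
    _ ≤ |(k i:ℝ)| := le_abs_self _
    _ ≤ _ := coord_le_norm k i
  exact rpow_neg_anti (by positivity) (by linarith) (by positivity)

lemma box_zero (n : ℕ) : box n 0 = {0} := by
  simp [box]
  rfl

lemma zc_zero (n : ℕ) : zc (0 : Zn n) = 0 := by
  ext i; simp [zc]

lemma sum_w_lower (n : ℕ) (hn : 1 ≤ n) (J : ℕ) :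
    (1 + 2*√n) ^ (-(n:ℝ)) * J ≤ ∑ k ∈ box n J, (1 + ‖zc k‖) ^ (-(n:ℝ)) := by
  induction J with
  | zero => simp
            positivity
  | succ J ih =>
    rw [← Finset.sum_sdiff (box_mono n J)]
    have hw : ∀ k ∈ box n (J+1) \ box n J,
        ((1 + 2*√n) * 2^J) ^ (-(n:ℝ)) ≤ (1 + ‖zc k‖) ^ (-(n:ℝ)) := by
      intro k hk
      exact w_lb k (Finset.mem_sdiff.1 hk).1
    have hcard : 2^(J*n) ≤ (box n (J+1) \ box n J).card := by
      rw [Finset.card_sdiff_of_subset (box_mono n J), card_box, card_box]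
      have : 2^(J*n) * 2 ≤ 2^((J+1)*n) := by
        rw [show (J+1)*n = J*n + n by ring, pow_add]
        exact Nat.mul_le_mul_left _ (by calc 2 = 2^1 := rfl
                                           _ ≤ 2^n := Nat.pow_le_pow_right (by norm_num) hn)
      omega
    have hslab : (1 + 2*√n) ^ (-(n:ℝ)) ≤ ∑ k ∈ box n (J+1) \ box n J, (1 + ‖zc k‖) ^ (-(n:ℝ)) := by
      have h1 : ((box n (J+1) \ box n J).card : ℝ) • (((1 + 2*√n) * 2^J) ^ (-(n:ℝ)))
          ≤ ∑ k ∈ box n (J+1) \ box n J, (1 + ‖zc k‖) ^ (-(n:ℝ)) := by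
        rw [Nat.cast_smul_eq_nsmul]
        exact Finset.card_nsmul_le_sum _ _ _ hw
      refine le_trans ?_ h1
      rw [smul_eq_mul]
      have hms : (1 + 2*√n) ^ (-(n:ℝ)) * ((2:ℝ)^J) ^ (-(n:ℝ)) = ((1 + 2*√n) * 2^J) ^ (-(n:ℝ)) := by
        rw [← Real.mul_rpow (by positivity) (by positivity)]
      have h2J : ((2:ℝ)^J) ^ (-(n:ℝ)) = ((2:ℝ)^(J*n))⁻¹ := by
        rw [Real.rpow_neg (by positivity), Real.rpow_natCast, ← pow_mul]
      have hcr : ((2:ℝ)^(J*n)) ≤ ((box n (J+1) \ box n J).card : ℝ) := by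
        exact_mod_cast hcard
      rw [← hms, h2J]
      rw [← mul_assoc]
      calc (1 + 2*√n) ^ (-(n:ℝ))
          = (1 + 2*√n) ^ (-(n:ℝ)) * ((2:ℝ)^(J*n)) * ((2:ℝ)^(J*n))⁻¹ := by
            field_simp
        _ ≤ ((box n (J+1) \ box n J).card : ℝ) * (1 + 2*√n) ^ (-(n:ℝ)) * ((2:ℝ)^(J*n))⁻¹ := by
            apply mul_le_mul_of_nonneg_right _ (by positivity)
            rw [mul_comm ((1 + 2*√n) ^ (-(n:ℝ)))]
            apply mul_le_mul_of_nonneg_right hcr (by positivity)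
    push_cast
    calc (1 + 2*√n) ^ (-(n:ℝ)) * (J+1)
        = (1 + 2*√n) ^ (-(n:ℝ)) * J + (1 + 2*√n) ^ (-(n:ℝ)) := by ring
      _ ≤ _ := by
          rw [add_comm (∑ k ∈ box n (J+1) \ box n J, _)]
          exact add_le_add ih hslab

lemma sum_w_upper (n : ℕ) (J : ℕ) :
    ∑ k ∈ box n J, (1 + ‖zc k‖) ^ (-(n:ℝ)) ≤ 1 + J * 2^n := by
  induction J with
  | zero => simp [box_zero, zc_zero]
  | succ J ih =>
    rw [← Finset.sum_sdiff (box_mono n J)]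
    have hslab : ∑ k ∈ box n (J+1) \ box n J, (1 + ‖zc k‖) ^ (-(n:ℝ)) ≤ 2^n := by
      have h1 : ∑ k ∈ box n (J+1) \ box n J, (1 + ‖zc k‖) ^ (-(n:ℝ))
          ≤ (box n (J+1) \ box n J).card • (((2:ℝ)^J) ^ (-(n:ℝ))) :=
        Finset.sum_le_card_nsmul _ _ _ (fun k hk =>
          w_ub k (Finset.mem_sdiff.1 hk).1 (Finset.mem_sdiff.1 hk).2)
      refine h1.trans ?_
      rw [nsmul_eq_mul]
      have hc : ((box n (J+1) \ box n J).card : ℝ) ≤ 2^((J+1)*n) := by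
        have := Finset.card_le_card (Finset.sdiff_subset : box n (J+1) \ box n J ⊆ box n (J+1))
        rw [card_box] at this
        exact_mod_cast this
      have h2J : ((2:ℝ)^J) ^ (-(n:ℝ)) = ((2:ℝ)^(J*n))⁻¹ := by
        rw [Real.rpow_neg (by positivity), Real.rpow_natCast, ← pow_mul]
      rw [h2J]
      calc ((box n (J+1) \ box n J).card : ℝ) * ((2:ℝ)^(J*n))⁻¹
          ≤ 2^((J+1)*n) * ((2:ℝ)^(J*n))⁻¹ := by
            apply mul_le_mul_of_nonneg_right hc (by positivity)
        _ = 2^n := by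
            rw [show (J+1)*n = J*n + n by ring, pow_add]
            field_simp
    push_cast
    calc _ ≤ (2:ℝ)^n + (1 + J * 2^n) := add_le_add hslab ih
      _ = 1 + (J+1) * 2^n := by ring

lemma lqNorm_eq_sum {ι : Type*} (r : ℝ≥0∞) (hr : 0 < r.toReal) (hrt : r ≠ ∞)
    (g : ι → ℝ≥0∞) (T : Finset ι) (hg : ∀ i ∉ T, g i = 0) :
    lqNorm r g = (∑ i ∈ T, g i ^ r.toReal) ^ (1/r.toReal) := by
  rw [lqNorm, if_neg hrt, tsum_eq_sum]
  intro i hi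
  rw [hg i hi, ENNReal.zero_rpow_of_pos hr]

end SeqNec

/-- The counting argument in the proof of Lemma 4.1: if `p < q` and
`‖{c_k}‖_{ℓ^p} ≲ ‖{(1+|k|)^s c_k}‖_{ℓ^q}` for all finitely supported sequences,
then `s > n(1/p - 1/q)`. -/
theorem sequence_inequality_necessity
    (n : ℕ) (hn : 1 ≤ n) (p q : ℝ≥0∞) (hp : 1 ≤ p) (hq : 1 ≤ q) (hpq : p < q) (s : ℝ)
    (h : ∃ C : ℝ, 0 < C ∧ ∀ c : Zn n → ℂ, FinSupp c →
        lqNorm p (fun k : Zn n => (‖c k‖₊ : ℝ≥0∞)) ≤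
          ENNReal.ofReal C *
            lqNorm q (fun k : Zn n =>
              ENNReal.ofReal ((1 + ‖zc k‖) ^ s) * (‖c k‖₊ : ℝ≥0∞))) :
    (n : ℝ) * ((1 / p).toReal - (1 / q).toReal) < s := by
  classical
  obtain ⟨C, hC, hIneq⟩ := h
  by_contra hcon
  push_neg at hcon
  set a := (1/p).toReal with ha_def
  set b := (1/q).toReal with hb_def
  have hpm : p ≠ ∞ := (hpq.trans_le le_top).ne
  have hp0 : p ≠ 0 := fun h0 => by simp [h0] at hp
  have hq0 : q ≠ 0 := fun h0 => by simp [h0] at hq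
  have hpt1 : (1:ℝ) ≤ p.toReal := by
    have := ENNReal.toReal_mono hpm hp
    simpa using this
  have hpt0 : (0:ℝ) < p.toReal := by linarith
  have ha : a = (p.toReal)⁻¹ := by rw [ha_def, one_div, ENNReal.toReal_inv]
  have hb0 : (0:ℝ) ≤ b := ENNReal.toReal_nonneg
  have hba : b < a := by
    rw [ha_def, hb_def]
    refine (ENNReal.toReal_lt_toReal ?_ ?_).mpr ?_
    · simp [one_div, hq0]
    · simp [one_div, hp0]
    · rw [one_div, one_div]; exact ENNReal.inv_lt_inv.mpr hpq
  have ha0 : (0:ℝ) < a := lt_of_le_of_lt hb0 hba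
  set κ : ℝ := (1 + 2*√n) ^ (-(n:ℝ)) with hκ_def
  have hκ : 0 < κ := by rw [hκ_def]; positivity
  have hw1 : ∀ k : Zn n, (1:ℝ) ≤ 1 + ‖zc k‖ := fun k => by linarith [norm_nonneg (zc k)]
  have hw0 : ∀ k : Zn n, (0:ℝ) < 1 + ‖zc k‖ := fun k => lt_of_lt_of_le one_pos (hw1 k)
  have key : ∀ J : ℕ, 1 ≤ J → (κ * J) ^ a ≤ C * ((1 + (J:ℝ) * 2^n) ^ b) := by
    intro J hJ
    have hJ1 : (1:ℝ) ≤ (J:ℝ) := by exact_mod_cast hJ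
    have hJ0 : (0:ℝ) < (J:ℝ) := by linarith
    set e : ℝ := -(s + n*b) with he_def
    set c : Zn n → ℂ :=
      fun k => if k ∈ SeqNec.box n J then (((1+‖zc k‖)^e : ℝ) : ℂ) else 0 with hc_def
    have hcs : FinSupp c := by
      apply Set.Finite.subset (SeqNec.box n J).finite_toSet
      intro k hk
      simp only [Function.mem_support] at hk
      by_contra hkb
      have hkb' : k ∉ SeqNec.box n J := by simpa using hkb
      exact hk (by simp [hc_def, hkb'])
    have hnn : ∀ k, (‖c k‖₊ : ℝ≥0∞) =
        if k ∈ SeqNec.box n J then ENNReal.ofReal ((1+‖zc k‖)^e) else 0 := by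
      intro k
      by_cases hk : k ∈ SeqNec.box n J
      · rw [if_pos hk]
        simp only [hc_def, if_pos hk]
        rw [Complex.nnnorm_real, ← enorm_eq_nnnorm,
          Real.enorm_eq_ofReal (Real.rpow_nonneg (hw0 k).le e)]
      · rw [if_neg hk]
        simp [hc_def, hk]
    -- LHS lower bound
    have hL : lqNorm p (fun k : Zn n => (‖c k‖₊ : ℝ≥0∞)) =
        (∑ k ∈ SeqNec.box n J,
          (ENNReal.ofReal ((1+‖zc k‖)^e)) ^ p.toReal) ^ (1/p.toReal) := by
      rw [SeqNec.lqNorm_eq_sum p hpt0 hpm _ (SeqNec.box n J)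
        (fun k hk => by rw [hnn k, if_neg hk])]
      congr 1
      refine Finset.sum_congr rfl fun k hk => ?_
      rw [hnn k, if_pos hk]
    have hterm : ∀ k : Zn n, (ENNReal.ofReal ((1+‖zc k‖)^e)) ^ p.toReal
        = ENNReal.ofReal ((1+‖zc k‖)^(e * p.toReal)) := by
      intro k
      rw [ENNReal.ofReal_rpow_of_pos (Real.rpow_pos_of_pos (hw0 k) e),
        ← Real.rpow_mul (hw0 k).le]
    have hept : -(n:ℝ) ≤ e * p.toReal := by
      have hapt : a * p.toReal = 1 := by rw [ha]; field_simp
      have h1 : s + (n:ℝ)*b ≤ (n:ℝ)*a := by nlinarith [hcon]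
      have h2 : (s + (n:ℝ)*b) * p.toReal ≤ (n:ℝ)*a*p.toReal :=
        mul_le_mul_of_nonneg_right h1 (by linarith)
      have h3 : (n:ℝ)*a*p.toReal = n := by rw [mul_assoc, hapt, mul_one]
      rw [he_def, neg_mul]
      linarith
    have hLlow : ENNReal.ofReal ((κ*(J:ℝ))^a) ≤ lqNorm p (fun k : Zn n => (‖c k‖₊ : ℝ≥0∞)) := by
      rw [hL]
      have hsum : ENNReal.ofReal (κ*(J:ℝ)) ≤
          ∑ k ∈ SeqNec.box n J, (ENNReal.ofReal ((1+‖zc k‖)^e)) ^ p.toReal := by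
        calc ENNReal.ofReal (κ*(J:ℝ))
            ≤ ENNReal.ofReal (∑ k ∈ SeqNec.box n J, (1+‖zc k‖)^(-(n:ℝ))) := by
              apply ENNReal.ofReal_le_ofReal
              rw [hκ_def]
              exact SeqNec.sum_w_lower n hn J
          _ = ∑ k ∈ SeqNec.box n J, ENNReal.ofReal ((1+‖zc k‖)^(-(n:ℝ))) :=
              ENNReal.ofReal_sum_of_nonneg fun k _ => Real.rpow_nonneg (hw0 k).le _
          _ ≤ _ := by
              refine Finset.sum_le_sum fun k _ => ?_
              rw [hterm k]
              exact ENNReal.ofReal_le_ofReal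
                (Real.rpow_le_rpow_of_exponent_le (hw1 k) hept)
      calc ENNReal.ofReal ((κ*(J:ℝ))^a) = (ENNReal.ofReal (κ*(J:ℝ)))^a := by
            rw [ENNReal.ofReal_rpow_of_pos (mul_pos hκ hJ0)]
        _ = (ENNReal.ofReal (κ*(J:ℝ)))^(1/p.toReal) := by rw [ha, one_div]
        _ ≤ _ := ENNReal.rpow_le_rpow hsum (by positivity)
    -- RHS upper bound
    have hRterm : ∀ k : Zn n, (ENNReal.ofReal ((1 + ‖zc k‖) ^ s) * (‖c k‖₊ : ℝ≥0∞)) =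
        if k ∈ SeqNec.box n J then ENNReal.ofReal ((1+‖zc k‖)^(-((n:ℝ)*b))) else 0 := by
      intro k
      rw [hnn k]
      by_cases hk : k ∈ SeqNec.box n J
      · rw [if_pos hk, if_pos hk,
          ← ENNReal.ofReal_mul (Real.rpow_nonneg (hw0 k).le s),
          ← Real.rpow_add (hw0 k),
          show s + e = -((n:ℝ)*b) by rw [he_def]; ring]
      · rw [if_neg hk, if_neg hk, mul_zero]
    have hRup : lqNorm q (fun k : Zn n => ENNReal.ofReal ((1 + ‖zc k‖) ^ s) * (‖c k‖₊ : ℝ≥0∞))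
        ≤ ENNReal.ofReal ((1 + (J:ℝ)*2^n)^b) := by
      by_cases hqi : q = ∞
      · have hb00 : b = 0 := by rw [hb_def, hqi]; simp
        rw [hqi, lqNorm, if_pos rfl]
        simp only [hb00, Real.rpow_zero, ENNReal.ofReal_one]
        refine iSup_le fun k => ?_
        rw [hRterm k]
        simp only [hb00, mul_zero, neg_zero, Real.rpow_zero, ENNReal.ofReal_one]
        split <;> simp
      · have hqt1 : (1:ℝ) ≤ q.toReal := by
          have := ENNReal.toReal_mono hqi hq
          simpa using this
        have hqt0 : (0:ℝ) < q.toReal := by linarith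
        have hbq : b * q.toReal = 1 := by
          rw [hb_def, one_div, ENNReal.toReal_inv]
          field_simp
        rw [SeqNec.lqNorm_eq_sum q hqt0 hqi _ (SeqNec.box n J)
          (fun k hk => by rw [hRterm k, if_neg hk])]
        have hsum : ∑ k ∈ SeqNec.box n J,
            (ENNReal.ofReal ((1 + ‖zc k‖) ^ s) * (‖c k‖₊ : ℝ≥0∞)) ^ q.toReal
            ≤ ENNReal.ofReal (1 + (J:ℝ)*2^n) := by
          calc ∑ k ∈ SeqNec.box n J,
              (ENNReal.ofReal ((1 + ‖zc k‖) ^ s) * (‖c k‖₊ : ℝ≥0∞)) ^ q.toReal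
              = ∑ k ∈ SeqNec.box n J, ENNReal.ofReal ((1+‖zc k‖)^(-(n:ℝ))) := by
                refine Finset.sum_congr rfl fun k hk => ?_
                rw [hRterm k, if_pos hk,
                  ENNReal.ofReal_rpow_of_pos (Real.rpow_pos_of_pos (hw0 k) _),
                  ← Real.rpow_mul (hw0 k).le,
                  show (-((n:ℝ)*b)) * q.toReal = -((n:ℝ)*(b*q.toReal)) by ring,
                  hbq, mul_one]
            _ = ENNReal.ofReal (∑ k ∈ SeqNec.box n J, (1+‖zc k‖)^(-(n:ℝ))) :=
                (ENNReal.ofReal_sum_of_nonneg fun k _ => Real.rpow_nonneg (hw0 k).le _).symm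
            _ ≤ ENNReal.ofReal (1 + (J:ℝ)*2^n) :=
                ENNReal.ofReal_le_ofReal (SeqNec.sum_w_upper n J)
        have hb1q : b = 1/q.toReal := by rw [hb_def, one_div, one_div, ENNReal.toReal_inv]
        calc _ ≤ (ENNReal.ofReal (1 + (J:ℝ)*2^n))^(1/q.toReal) :=
              ENNReal.rpow_le_rpow hsum (by positivity)
          _ = ENNReal.ofReal ((1 + (J:ℝ)*2^n)^b) := by
              rw [ENNReal.ofReal_rpow_of_pos (by positivity), ← hb1q]
    -- combine
    have hcomb : ENNReal.ofReal ((κ*(J:ℝ))^a) ≤ ENNReal.ofReal (C * (1 + (J:ℝ)*2^n)^b) := by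
      calc ENNReal.ofReal ((κ*(J:ℝ))^a) ≤ _ := hLlow
        _ ≤ ENNReal.ofReal C * lqNorm q (fun k : Zn n =>
              ENNReal.ofReal ((1 + ‖zc k‖) ^ s) * (‖c k‖₊ : ℝ≥0∞)) := hIneq c hcs
        _ ≤ ENNReal.ofReal C * ENNReal.ofReal ((1 + (J:ℝ)*2^n)^b) :=
              mul_le_mul_right hRup _
        _ = ENNReal.ofReal (C * (1 + (J:ℝ)*2^n)^b) := (ENNReal.ofReal_mul hC.le).symm
    have hpos : (0:ℝ) ≤ C * (1 + (J:ℝ)*2^n)^b := by positivity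
    exact (ENNReal.ofReal_le_ofReal_iff hpos).mp hcomb
  -- final contradiction
  set K : ℝ := C * ((2:ℝ)^(n+1))^b / κ^a with hK_def
  have hK0 : 0 < K := by
    rw [hK_def]
    exact div_pos (mul_pos hC (Real.rpow_pos_of_pos (by positivity) _))
      (Real.rpow_pos_of_pos hκ _)
  have hJbound : ∀ J : ℕ, 1 ≤ J → ((J:ℝ))^(a-b) ≤ K := by
    intro J hJ
    have hJ1 : (1:ℝ) ≤ (J:ℝ) := by exact_mod_cast hJ
    have hJ0 : (0:ℝ) < (J:ℝ) := by linarith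
    have h1 : (κ*(J:ℝ))^a = κ^a * (J:ℝ)^a := Real.mul_rpow hκ.le (by positivity)
    have h2 : (1 + (J:ℝ)*2^n) ≤ (J:ℝ) * 2^(n+1) := by
      have h2n : (1:ℝ) ≤ (2:ℝ)^n := one_le_pow₀ (by norm_num)
      have : (1:ℝ) ≤ (J:ℝ)*2^n := by nlinarith
      calc 1 + (J:ℝ)*2^n ≤ (J:ℝ)*2^n + (J:ℝ)*2^n := by linarith
      _ = (J:ℝ)*2^(n+1) := by ring
    have h3 : (1 + (J:ℝ)*2^n)^b ≤ ((J:ℝ)*2^(n+1))^b :=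
      Real.rpow_le_rpow (by positivity) h2 hb0
    have h4 : ((J:ℝ)*2^(n+1))^b = (J:ℝ)^b * ((2:ℝ)^(n+1))^b :=
      Real.mul_rpow (by positivity) (by positivity)
    have h5 : κ^a * (J:ℝ)^a ≤ C * ((J:ℝ)^b * ((2:ℝ)^(n+1))^b) := by
      calc κ^a * (J:ℝ)^a = (κ*(J:ℝ))^a := h1.symm
      _ ≤ C * (1 + (J:ℝ)*2^n)^b := key J hJ
      _ ≤ C * ((J:ℝ)*2^(n+1))^b := mul_le_mul_of_nonneg_left h3 hC.le
      _ = C * ((J:ℝ)^b * ((2:ℝ)^(n+1))^b) := by rw [h4]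
    have h6 : (J:ℝ)^a = (J:ℝ)^(a-b) * (J:ℝ)^b := by
      rw [← Real.rpow_add hJ0]; ring_nf
    have hJb : (0:ℝ) < (J:ℝ)^b := Real.rpow_pos_of_pos hJ0 b
    have h7 : κ^a * (J:ℝ)^(a-b) ≤ C * ((2:ℝ)^(n+1))^b := by
      have h8 : (κ^a * (J:ℝ)^(a-b)) * (J:ℝ)^b ≤ (C * ((2:ℝ)^(n+1))^b) * (J:ℝ)^b := by
        calc (κ^a * (J:ℝ)^(a-b)) * (J:ℝ)^b = κ^a * (J:ℝ)^a := by rw [h6]; ring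
        _ ≤ C * ((J:ℝ)^b * ((2:ℝ)^(n+1))^b) := h5
        _ = (C * ((2:ℝ)^(n+1))^b) * (J:ℝ)^b := by ring
      exact le_of_mul_le_mul_right h8 hJb
    rw [hK_def, le_div_iff₀ (Real.rpow_pos_of_pos hκ a)]
    calc (J:ℝ)^(a-b) * κ^a = κ^a * (J:ℝ)^(a-b) := by ring
    _ ≤ _ := h7
  have hab0 : (0:ℝ) < a - b := by linarith
  set X : ℝ := (K+1)^((a-b)⁻¹) with hX_def
  set J0 : ℕ := max 1 ⌈X⌉₊ with hJ0_def
  have hJX : X ≤ (J0:ℝ) := le_trans (Nat.le_ceil X) (by exact_mod_cast le_max_right 1 ⌈X⌉₊)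
  have hX0 : (0:ℝ) ≤ X := by
    rw [hX_def]; exact Real.rpow_nonneg (by linarith) _
  have hfin : K + 1 ≤ (J0:ℝ)^(a-b) := by
    calc K + 1 = X^(a-b) := by
          rw [hX_def, ← Real.rpow_mul (by linarith), inv_mul_cancel₀ (ne_of_gt hab0),
            Real.rpow_one]
    _ ≤ (J0:ℝ)^(a-b) := Real.rpow_le_rpow hX0 hJX hab0.le
  have := hJbound J0 (le_max_left 1 ⌈X⌉₊)
  linarith
end
end

section
/- Let n ≥ 1, let 1 ≤ q < p < ∞ and s ∈ ℝ. Suppose there exists C > 0 such that { ∑_{k∈ℤ^n, k≠0} |k|^{(n(1/p−1)+s)q} ( ∑_{ℓ∈ℤ^n, |k|/2 ≤ |ℓ| ≤ 2|k|} |c_ℓ|^p )^{q/p} }^{1/q} ≤ C ( ∑_{k≠0} |c_k|^p )^{1/p} for all finitely supported complex sequences {c_k}_{k∈ℤ^n∖{0}}. Then s < −n(1/p + 1/q − 1). -/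
noncomputable section

open MeasureTheory Real ENNReal

/-- The counting argument in the proof of Lemma 4.3: if `1 ≤ q < p < ∞` and the
dyadic-shell sequence inequality holds for all finitely supported sequences on
`ℤⁿ \ {0}`, then `s < -n(1/p + 1/q - 1)`. -/
theorem shell_sequence_inequality_necessity
    (n : ℕ) (hn : 1 ≤ n) (p q : ℝ) (hq : 1 ≤ q) (hqp : q < p) (s : ℝ)
    (h : ∃ C : ℝ, 0 < C ∧ ∀ c : Zn n → ℂ, FinSupp c → c 0 = 0 →
        (∑' k : Zn n, if k = 0 then 0 else
            (‖zc k‖₊ : ℝ≥0∞) ^ (((n : ℝ) * (1 / p - 1) + s) * q) *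
              (∑' l : Zn n, if ‖zc k‖ / 2 ≤ ‖zc l‖ ∧ ‖zc l‖ ≤ 2 * ‖zc k‖ then
                  (‖c l‖₊ : ℝ≥0∞) ^ p else 0) ^ (q / p)) ^ (1 / q)
          ≤ ENNReal.ofReal C *
              (∑' k : Zn n, (‖c k‖₊ : ℝ≥0∞) ^ p) ^ (1 / p)) :
    s < -(n : ℝ) * (1 / p + 1 / q - 1) := by
  by_contra hs
  push_neg at hs
  obtain ⟨C, hC, hineq⟩ := h
  have hq0 : (0:ℝ) < q := lt_of_lt_of_le one_pos hq
  have hp0 : (0:ℝ) < p := lt_trans hq0 hqp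
  have hn0 : (0:ℝ) < n := by exact_mod_cast hn
  set α : ℝ := (n:ℝ) * (1/p - 1) + s with hα
  set β : ℝ := α * q + (n:ℝ) with hβdef
  -- β ≥ 0
  have hs' : (n:ℝ) - n/p - n/q ≤ s := by
    have : -(n:ℝ) * (1/p + 1/q - 1) = (n:ℝ) - n/p - n/q := by ring
    linarith [hs, this ▸ hs]
  have hβ : 0 ≤ β := by
    have h1 : -((n:ℝ)/q) ≤ α := by
      rw [hα]
      have : (n:ℝ) * (1/p - 1) = n/p - n := by ring
      linarith
    have h2 : (-((n:ℝ)/q)) * q ≤ α * q := mul_le_mul_of_nonneg_right h1 hq0.le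
    have h3 : (-((n:ℝ)/q)) * q = -(n:ℝ) := by field_simp
    have h4 : -(n:ℝ) ≤ α * q := h3 ▸ h2
    rw [hβdef]; linarith
  -- constants
  set κ : ℝ := (Real.sqrt n) ^ (α*q) * min 1 ((2:ℝ) ^ (α*q)) with hκdef
  have hκ : 0 < κ :=
    mul_pos (Real.rpow_pos_of_pos (Real.sqrt_pos.2 hn0) _)
      (lt_min one_pos (Real.rpow_pos_of_pos two_pos _))
  set r : ℝ := 1 - q/p with hrdef
  have hr : 0 < r := by
    rw [hrdef, sub_pos]
    exact (div_lt_one hp0).2 hqp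
  set E : ℝ := C ^ q / κ with hEdef
  have hE : 0 < E := div_pos (Real.rpow_pos_of_pos hC _) hκ
  set N : ℕ := ⌈E ^ (1/r)⌉₊ + 1 with hNdef
  have hN1 : 1 ≤ N := Nat.le_add_left 1 _
  have hN0 : (0:ℝ) < N := by
    have : (1:ℝ) ≤ N := by exact_mod_cast hN1
    linarith
  have hNE : E < (N:ℝ) ^ r := by
    have h1 : E ^ (1/r) < N := by
      calc E ^ (1/r) ≤ ⌈E ^ (1/r)⌉₊ := Nat.le_ceil _
        _ < N := by exact_mod_cast Nat.lt_succ_self _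
    have h2 : (E ^ (1/r)) ^ r < (N:ℝ) ^ r :=
      Real.rpow_lt_rpow (Real.rpow_nonneg hE.le _) h1 hr
    rwa [← Real.rpow_mul hE.le, one_div_mul_cancel hr.ne', Real.rpow_one] at h2
  -- the test sequence
  set dgl : ℕ → Zn n := fun j _ => (2:ℤ)^j with hdgl
  have hinj : Function.Injective dgl := by
    intro j j' hjj
    have h0 : (2:ℤ)^j = 2^j' := congrFun hjj ⟨0, hn⟩
    have h0' : (2:ℕ)^j = 2^j' := by exact_mod_cast h0
    exact Nat.pow_right_injective le_rfl h0'
  set a : ℕ → ℝ := fun j => (2:ℝ) ^ (-(j:ℝ) * β / q) with hadef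
  have ha0 : ∀ j, 0 < a j := fun j => Real.rpow_pos_of_pos two_pos _
  have ha1 : ∀ j, a j ≤ 1 := by
    intro j
    apply Real.rpow_le_one_of_one_le_of_nonpos one_le_two
    have : 0 ≤ (j:ℝ) * β := mul_nonneg (Nat.cast_nonneg j) hβ
    rw [neg_mul]
    exact div_nonpos_of_nonpos_of_nonneg (by linarith) hq0.le
  set c : Zn n → ℂ := fun l => ∑ j ∈ Finset.range N, if l = dgl j then ((a j : ℝ) : ℂ) else 0
    with hcdef
  have hceval : ∀ j, j < N → c (dgl j) = ((a j : ℝ) : ℂ) := by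
    intro j hj
    simp only [hcdef]
    rw [Finset.sum_eq_single_of_mem j (Finset.mem_range.2 hj)]
    · rw [if_pos rfl]
    · intro j' _ hne
      rw [if_neg (fun hh => hne (hinj hh.symm))]
  have hczero : ∀ l : Zn n, (∀ j, j < N → l ≠ dgl j) → c l = 0 := by
    intro l hl
    simp only [hcdef]
    apply Finset.sum_eq_zero
    intro j hj
    rw [if_neg (hl j (Finset.mem_range.1 hj))]
  have hcsupp : (Function.support c).Finite := by
    apply Set.Finite.subset ((Finset.range N).image dgl).finite_toSet
    intro l hl
    simp only [Function.mem_support] at hl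
    by_contra hmem
    apply hl
    apply hczero
    intro j hj hlj
    exact hmem (by simp [hlj]; exact ⟨j, hj, rfl⟩)
  have hc0 : c 0 = 0 := by
    apply hczero
    intro j hj h0
    have := congrFun h0 ⟨0, hn⟩
    have : (0:ℤ) = 2^j := this
    have hpos : (0:ℤ) < 2^j := pow_pos two_pos j
    omega
  -- norms
  have hnorm : ∀ k : Zn n, ‖zc k‖ = Real.sqrt (∑ i, ((k i : ℝ))^2) := by
    intro k
    rw [EuclideanSpace.norm_eq (zc k)]
    simp [zc, Real.norm_eq_abs, sq_abs]
  have hdglnorm : ∀ j : ℕ, ‖zc (dgl j)‖ = Real.sqrt n * 2^j := by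
    intro j
    rw [hnorm]
    have : ∑ i : Fin n, (((dgl j) i : ℝ))^2 = (n:ℝ) * ((2:ℝ)^j)^2 := by
      rw [hdgl]
      push_cast
      rw [Finset.sum_const, Finset.card_univ, Fintype.card_fin]
      ring
    rw [this, Real.sqrt_mul (Nat.cast_nonneg n), Real.sqrt_sq (by positivity)]
  -- the boxes
  set Kf : ℕ → Finset (Zn n) :=
    fun j => Fintype.piFinset fun _ => Finset.Icc ((2:ℤ)^j) (2^(j+1) - 1) with hKf
  have hKmem : ∀ j (k : Zn n), k ∈ Kf j ↔ ∀ i, (2:ℤ)^j ≤ k i ∧ k i ≤ 2^(j+1) - 1 := by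
    intro j k
    rw [hKf]
    simp [Fintype.mem_piFinset, Finset.mem_Icc]
  have hKcard : ∀ j, (Kf j).card = 2^(j*n) := by
    intro j
    rw [hKf]
    rw [Fintype.card_piFinset]
    have h : (Finset.Icc ((2:ℤ)^j) (2^(j+1) - 1)).card = 2^j := by
      rw [Int.card_Icc]
      have h2 : (2:ℤ)^(j+1) - 1 + 1 - 2^j = 2^j := by rw [pow_succ]; ring
      rw [h2, show ((2:ℤ)^j) = ((2^j : ℕ) : ℤ) by push_cast; ring, Int.toNat_natCast]
    simp [h, pow_mul]
  have hKlb : ∀ j (k : Zn n), k ∈ Kf j → Real.sqrt n * 2^j ≤ ‖zc k‖ := by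
    intro j k hk
    rw [hnorm]
    have hsum : (n:ℝ) * ((2:ℝ)^j)^2 ≤ ∑ i : Fin n, ((k i : ℝ))^2 := by
      have : ∀ i : Fin n, ((2:ℝ)^j)^2 ≤ ((k i : ℝ))^2 := by
        intro i
        have h1 := ((hKmem j k).1 hk i).1
        have h1' : (2:ℝ)^j ≤ (k i : ℝ) := by exact_mod_cast h1
        exact pow_le_pow_left₀ (by positivity) h1' 2
      calc (n:ℝ) * ((2:ℝ)^j)^2 = ∑ _i : Fin n, ((2:ℝ)^j)^2 := by
            rw [Finset.sum_const, Finset.card_univ, Fintype.card_fin]; ring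
        _ ≤ _ := Finset.sum_le_sum fun i _ => this i
    calc Real.sqrt n * 2^j = Real.sqrt ((n:ℝ) * ((2:ℝ)^j)^2) := by
          rw [Real.sqrt_mul (Nat.cast_nonneg n), Real.sqrt_sq (by positivity)]
      _ ≤ _ := Real.sqrt_le_sqrt hsum
  have hKub : ∀ j (k : Zn n), k ∈ Kf j → ‖zc k‖ ≤ Real.sqrt n * 2^(j+1) := by
    intro j k hk
    rw [hnorm]
    have hsum : ∑ i : Fin n, ((k i : ℝ))^2 ≤ (n:ℝ) * ((2:ℝ)^(j+1))^2 := by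
      have : ∀ i : Fin n, ((k i : ℝ))^2 ≤ ((2:ℝ)^(j+1))^2 := by
        intro i
        have h1 := ((hKmem j k).1 hk i).1
        have h2 := ((hKmem j k).1 hk i).2
        have h1' : (0:ℝ) ≤ (k i : ℝ) := by
          have : (0:ℤ) ≤ k i := le_trans (by positivity) h1
          exact_mod_cast this
        have h2' : (k i : ℝ) ≤ (2:ℝ)^(j+1) := by
          have : (k i : ℤ) ≤ 2^(j+1) := by linarith [h2]
          exact_mod_cast this
        exact pow_le_pow_left₀ h1' h2' 2
      calc ∑ i : Fin n, ((k i : ℝ))^2 ≤ ∑ _i : Fin n, ((2:ℝ)^(j+1))^2 :=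
            Finset.sum_le_sum fun i _ => this i
        _ = (n:ℝ) * ((2:ℝ)^(j+1))^2 := by
            rw [Finset.sum_const, Finset.card_univ, Fintype.card_fin]; ring
    calc Real.sqrt (∑ i : Fin n, ((k i : ℝ))^2) ≤ Real.sqrt ((n:ℝ) * ((2:ℝ)^(j+1))^2) :=
          Real.sqrt_le_sqrt hsum
      _ = Real.sqrt n * 2^(j+1) := by
          rw [Real.sqrt_mul (Nat.cast_nonneg n), Real.sqrt_sq (by positivity)]
  have hKne : ∀ j (k : Zn n), k ∈ Kf j → k ≠ 0 := by
    intro j k hk h0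
    have h1 := ((hKmem j k).1 hk ⟨0, hn⟩).1
    rw [h0] at h1
    have : (0:ℤ) < 2^j := pow_pos two_pos j
    simp only [Pi.zero_apply] at h1
    omega
  have hKdisj : (↑(Finset.range N) : Set ℕ).PairwiseDisjoint Kf := by
    intro j _ j' _ hne
    apply Finset.disjoint_left.2
    intro k hk hk'
    rcases lt_or_gt_of_ne hne with hlt | hlt
    · have h1 := ((hKmem j k).1 hk ⟨0, hn⟩).2
      have h2 := ((hKmem j' k).1 hk' ⟨0, hn⟩).1
      have h3 : (2:ℤ)^(j+1) ≤ 2^j' := pow_le_pow_right₀ one_le_two hlt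
      omega
    · have h1 := ((hKmem j' k).1 hk' ⟨0, hn⟩).2
      have h2 := ((hKmem j k).1 hk ⟨0, hn⟩).1
      have h3 : (2:ℤ)^(j'+1) ≤ 2^j := pow_le_pow_right₀ one_le_two hlt
      omega

  -- key real identity per shell
  have hpq : p * (q/p) = q := by field_simp
  have hxj : ∀ j : ℕ,
      ((Real.sqrt n * 2^j) ^ (α*q) * min 1 ((2:ℝ)^(α*q))) * (a j)^q
        = κ * ((2:ℝ) ^ ((j:ℝ)*n))⁻¹ := by
    intro j
    have e1 : ((Real.sqrt n * 2^j : ℝ) ^ (α*q))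
        = (Real.sqrt n) ^ (α*q) * (2:ℝ)^((j:ℝ)*(α*q)) := by
      rw [Real.mul_rpow (Real.sqrt_nonneg _) (by positivity),
        ← Real.rpow_natCast (2:ℝ) j, ← Real.rpow_mul (by norm_num)]
    have e2 : (a j)^q = (2:ℝ)^(-(j:ℝ)*β) := by
      rw [hadef]
      simp only []
      rw [← Real.rpow_mul (by norm_num), div_mul_cancel₀ _ hq0.ne']
    rw [e1, e2]
    have e3 : (2:ℝ)^((j:ℝ)*(α*q)) * (2:ℝ)^(-(j:ℝ)*β) = (2:ℝ)^(-((j:ℝ)*n)) := by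
      rw [← Real.rpow_add two_pos]
      congr 1
      rw [hβdef]; ring
    calc (Real.sqrt n) ^ (α*q) * (2:ℝ)^((j:ℝ)*(α*q)) * min 1 ((2:ℝ)^(α*q)) * (2:ℝ)^(-(j:ℝ)*β)
        = (Real.sqrt n) ^ (α*q) * min 1 ((2:ℝ)^(α*q)) *
            ((2:ℝ)^((j:ℝ)*(α*q)) * (2:ℝ)^(-(j:ℝ)*β)) := by ring
      _ = κ * ((2:ℝ) ^ ((j:ℝ)*n))⁻¹ := by
          rw [e3, Real.rpow_neg (by norm_num), hκdef]
  -- per-point lower bound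
  have hterm : ∀ j, j < N → ∀ k : Zn n, k ∈ Kf j →
      ENNReal.ofReal (κ * ((2:ℝ) ^ ((j:ℝ)*n))⁻¹)
        ≤ (‖zc k‖₊ : ℝ≥0∞) ^ (α*q) *
            (∑' l : Zn n, if ‖zc k‖ / 2 ≤ ‖zc l‖ ∧ ‖zc l‖ ≤ 2 * ‖zc k‖ then
                (‖c l‖₊ : ℝ≥0∞) ^ p else 0) ^ (q / p) := by
    intro j hj k hk
    have hklb := hKlb j k hk
    have hkub := hKub j k hk
    have hkpos : 0 < ‖zc k‖ := lt_of_lt_of_le (by positivity) hklb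
    have hW : ENNReal.ofReal ((Real.sqrt n * 2^j) ^ (α*q) * min 1 ((2:ℝ)^(α*q)))
        ≤ (‖zc k‖₊ : ℝ≥0∞) ^ (α*q) := by
      rw [← ENNReal.ofReal_coe_nnreal, coe_nnnorm, ENNReal.ofReal_rpow_of_pos hkpos]
      apply ENNReal.ofReal_le_ofReal
      rcases le_or_gt 0 (α*q) with hα0 | hα0
      · calc (Real.sqrt n * 2^j : ℝ)^(α*q) * min 1 ((2:ℝ)^(α*q))
            ≤ (Real.sqrt n * 2^j : ℝ)^(α*q) * 1 :=
              mul_le_mul_of_nonneg_left (min_le_left _ _) (Real.rpow_nonneg (by positivity) _)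
          _ = (Real.sqrt n * 2^j : ℝ)^(α*q) := mul_one _
          _ ≤ ‖zc k‖^(α*q) := Real.rpow_le_rpow (by positivity) hklb hα0
      · calc (Real.sqrt n * 2^j : ℝ)^(α*q) * min 1 ((2:ℝ)^(α*q))
            ≤ (Real.sqrt n * 2^j : ℝ)^(α*q) * (2:ℝ)^(α*q) :=
              mul_le_mul_of_nonneg_left (min_le_right _ _) (Real.rpow_nonneg (by positivity) _)
          _ = (Real.sqrt n * 2^j * 2 : ℝ)^(α*q) :=
              (Real.mul_rpow (by positivity) (by norm_num)).symm
          _ = (Real.sqrt n * 2^(j+1) : ℝ)^(α*q) := by rw [pow_succ]; ring_nf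
          _ ≤ ‖zc k‖^(α*q) := Real.rpow_le_rpow_of_nonpos hkpos hkub hα0.le
    have hcond : ‖zc k‖ / 2 ≤ ‖zc (dgl j)‖ ∧ ‖zc (dgl j)‖ ≤ 2 * ‖zc k‖ := by
      have hp2 : (2:ℝ)^(j+1) = 2^j * 2 := pow_succ 2 j
      constructor
      · rw [hdglnorm]
        rw [hp2] at hkub
        linarith
      · rw [hdglnorm]
        linarith
    have hval : (fun l => if ‖zc k‖ / 2 ≤ ‖zc l‖ ∧ ‖zc l‖ ≤ 2 * ‖zc k‖ then
        (‖c l‖₊ : ℝ≥0∞) ^ p else 0) (dgl j) = ENNReal.ofReal ((a j)^p) := by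
      simp only []
      rw [if_pos hcond, hceval j hj, ← ENNReal.ofReal_coe_nnreal, coe_nnnorm, Complex.norm_real,
        Real.norm_eq_abs, abs_of_pos (ha0 j), ENNReal.ofReal_rpow_of_pos (ha0 j)]
    have hI : ENNReal.ofReal ((a j)^p)
        ≤ ∑' l : Zn n, if ‖zc k‖ / 2 ≤ ‖zc l‖ ∧ ‖zc l‖ ≤ 2 * ‖zc k‖ then
            (‖c l‖₊ : ℝ≥0∞) ^ p else 0 := hval ▸ ENNReal.le_tsum (dgl j)
    have hI2 : ENNReal.ofReal ((a j)^q)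
        ≤ (∑' l : Zn n, if ‖zc k‖ / 2 ≤ ‖zc l‖ ∧ ‖zc l‖ ≤ 2 * ‖zc k‖ then
            (‖c l‖₊ : ℝ≥0∞) ^ p else 0) ^ (q/p) := by
      have heq : ENNReal.ofReal ((a j)^q) = (ENNReal.ofReal ((a j)^p)) ^ (q/p) := by
        rw [ENNReal.ofReal_rpow_of_pos (by positivity), ← Real.rpow_mul (ha0 j).le, hpq]
      rw [heq]
      exact ENNReal.rpow_le_rpow hI (by positivity)
    calc ENNReal.ofReal (κ * ((2:ℝ) ^ ((j:ℝ)*n))⁻¹)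
        = ENNReal.ofReal ((Real.sqrt n * 2^j) ^ (α*q) * min 1 ((2:ℝ)^(α*q)))
            * ENNReal.ofReal ((a j)^q) := by
          rw [← ENNReal.ofReal_mul (by positivity), hxj j]
      _ ≤ _ := mul_le_mul' hW hI2
  -- per-shell lower bound
  have hcast : ∀ j : ℕ, (2:ℝ) ^ ((j:ℝ)*(n:ℝ)) = ((2^(j*n) : ℕ) : ℝ) := by
    intro j
    rw [show ((j:ℝ)*(n:ℝ)) = ((j*n : ℕ) : ℝ) by push_cast; ring, Real.rpow_natCast]
    push_cast; ring
  have hshell : ∀ j, j < N → ENNReal.ofReal κ ≤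
      ∑ k ∈ Kf j, (if k = 0 then 0 else
        (‖zc k‖₊ : ℝ≥0∞) ^ (α*q) *
          (∑' l : Zn n, if ‖zc k‖ / 2 ≤ ‖zc l‖ ∧ ‖zc l‖ ≤ 2 * ‖zc k‖ then
              (‖c l‖₊ : ℝ≥0∞) ^ p else 0) ^ (q / p)) := by
    intro j hj
    have hstep : ENNReal.ofReal κ
        = (Kf j).card • ENNReal.ofReal (κ * ((2:ℝ)^((j:ℝ)*n))⁻¹) := by
      rw [hKcard, nsmul_eq_mul, ← ENNReal.ofReal_natCast,
        ← ENNReal.ofReal_mul (by positivity)]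
      congr 1
      rw [← hcast j]
      field_simp
    rw [hstep, ← Finset.sum_const]
    apply Finset.sum_le_sum
    intro k hk
    rw [if_neg (hKne j k hk)]
    exact hterm j hj k hk
  -- total lower bound
  have hLB : ENNReal.ofReal ((N:ℝ) * κ)
      ≤ ∑' k : Zn n, (if k = 0 then 0 else
          (‖zc k‖₊ : ℝ≥0∞) ^ (α*q) *
            (∑' l : Zn n, if ‖zc k‖ / 2 ≤ ‖zc l‖ ∧ ‖zc l‖ ≤ 2 * ‖zc k‖ then
                (‖c l‖₊ : ℝ≥0∞) ^ p else 0) ^ (q / p)) := by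
    calc ENNReal.ofReal ((N:ℝ) * κ) = ∑ _j ∈ Finset.range N, ENNReal.ofReal κ := by
          rw [Finset.sum_const, Finset.card_range, nsmul_eq_mul,
            ENNReal.ofReal_mul (Nat.cast_nonneg N), ENNReal.ofReal_natCast]
      _ ≤ ∑ j ∈ Finset.range N, ∑ k ∈ Kf j, (if k = 0 then 0 else
            (‖zc k‖₊ : ℝ≥0∞) ^ (α*q) *
              (∑' l : Zn n, if ‖zc k‖ / 2 ≤ ‖zc l‖ ∧ ‖zc l‖ ≤ 2 * ‖zc k‖ then
                  (‖c l‖₊ : ℝ≥0∞) ^ p else 0) ^ (q / p)) :=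
          Finset.sum_le_sum fun j hj => hshell j (Finset.mem_range.1 hj)
      _ = ∑ k ∈ (Finset.range N).biUnion Kf, (if k = 0 then 0 else
            (‖zc k‖₊ : ℝ≥0∞) ^ (α*q) *
              (∑' l : Zn n, if ‖zc k‖ / 2 ≤ ‖zc l‖ ∧ ‖zc l‖ ≤ 2 * ‖zc k‖ then
                  (‖c l‖₊ : ℝ≥0∞) ^ p else 0) ^ (q / p)) :=
          (Finset.sum_biUnion hKdisj).symm
      _ ≤ _ := ENNReal.sum_le_tsum _
  -- upper bound for the right-hand side sum
  have hRB : (∑' k : Zn n, (‖c k‖₊ : ℝ≥0∞) ^ p) ≤ (N : ℝ≥0∞) := by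
    have htsum : (∑' k : Zn n, (‖c k‖₊ : ℝ≥0∞) ^ p)
        = ∑ l ∈ (Finset.range N).image dgl, (‖c l‖₊ : ℝ≥0∞) ^ p := by
      apply tsum_eq_sum
      intro l hl
      have hcz : c l = 0 := hczero l (fun j hj hlj =>
        hl (Finset.mem_image.2 ⟨j, Finset.mem_range.2 hj, hlj.symm⟩))
      rw [hcz]
      simp [ENNReal.zero_rpow_of_pos hp0]
    rw [htsum, Finset.sum_image (fun x _ y _ hxy => hinj hxy)]
    calc ∑ j ∈ Finset.range N, (‖c (dgl j)‖₊ : ℝ≥0∞) ^ p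
        ≤ ∑ _j ∈ Finset.range N, 1 := by
          apply Finset.sum_le_sum
          intro j hj
          rw [hceval j (Finset.mem_range.1 hj), ← ENNReal.ofReal_coe_nnreal, coe_nnnorm,
            Complex.norm_real, Real.norm_eq_abs, abs_of_pos (ha0 j),
            ENNReal.ofReal_rpow_of_pos (ha0 j)]
          exact ENNReal.ofReal_le_one.2 (Real.rpow_le_one (ha0 j).le (ha1 j) hp0.le)
      _ = (N : ℝ≥0∞) := by simp
  -- combine
  have hmain := hineq c hcsupp hc0
  have hL2 : ENNReal.ofReal (((N:ℝ)*κ) ^ (1/q))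
      ≤ (∑' k : Zn n, (if k = 0 then 0 else
          (‖zc k‖₊ : ℝ≥0∞) ^ (α*q) *
            (∑' l : Zn n, if ‖zc k‖ / 2 ≤ ‖zc l‖ ∧ ‖zc l‖ ≤ 2 * ‖zc k‖ then
                (‖c l‖₊ : ℝ≥0∞) ^ p else 0) ^ (q / p))) ^ (1/q) := by
    rw [← ENNReal.ofReal_rpow_of_pos (by positivity)]
    exact ENNReal.rpow_le_rpow hLB (by positivity)
  have hR2 : ENNReal.ofReal C * (∑' k : Zn n, (‖c k‖₊ : ℝ≥0∞) ^ p) ^ (1/p)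
      ≤ ENNReal.ofReal (C * (N:ℝ)^(1/p)) := by
    rw [ENNReal.ofReal_mul hC.le]
    apply mul_le_mul_right
    rw [← ENNReal.ofReal_rpow_of_pos hN0, ENNReal.ofReal_natCast]
    exact ENNReal.rpow_le_rpow hRB (by positivity)
  have hfin : ((N:ℝ)*κ)^(1/q) ≤ C * (N:ℝ)^(1/p) :=
    (ENNReal.ofReal_le_ofReal_iff (by positivity)).1
      (le_trans hL2 (le_trans hmain hR2))
  have h5 : (N:ℝ)*κ ≤ C^q * (N:ℝ)^(q/p) := by
    have h6 := Real.rpow_le_rpow (by positivity) hfin hq0.le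
    rw [← Real.rpow_mul (by positivity), one_div_mul_cancel hq0.ne', Real.rpow_one] at h6
    rw [Real.mul_rpow hC.le (by positivity), ← Real.rpow_mul (Nat.cast_nonneg N)] at h6
    rw [show (1/p)*q = q/p by ring] at h6
    exact h6
  have hpow : 0 < (N:ℝ)^(q/p) := Real.rpow_pos_of_pos hN0 _
  have hsplit : (N:ℝ) = (N:ℝ)^r * (N:ℝ)^(q/p) := by
    have hrq : r + q/p = 1 := by rw [hrdef]; ring
    rw [← Real.rpow_add hN0, hrq, Real.rpow_one]
  have h7 : (N:ℝ)^r * κ ≤ C^q := by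
    by_contra hcon
    push_neg at hcon
    have hmul := mul_lt_mul_of_pos_right hcon hpow
    have e : (N:ℝ)^r * κ * (N:ℝ)^(q/p) = (N:ℝ) * κ := by
      calc (N:ℝ)^r * κ * (N:ℝ)^(q/p) = ((N:ℝ)^r * (N:ℝ)^(q/p)) * κ := by ring
        _ = (N:ℝ) * κ := by rw [← hsplit]
    rw [e] at hmul
    linarith [h5]
  have h8 : (N:ℝ)^r ≤ E := by
    rw [hEdef, le_div_iff₀ hκ]
    exact h7
  linarith [hNE, h8]
end
end

section
/- Let n ≥ 1 and let φ, η ∈ S(ℝ^n) with supp φ ⊂ [−1,1]^n and supp η ⊂ [−1/2,1/2]^n. Then for every N ≥ 1 there exists a constant C_N > 0 such that for all x ∈ ℝ^n and all k, ℓ ∈ ℤ^n, |∫_{ℝ^n} e^{i(x−ℓ)·ξ} φ(ξ−k) η̂(ξ−ℓ) dξ| ≤ C_N (1+|x−ℓ|)^{−N} (1+|k−ℓ|)^{−N}. -/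
noncomputable section

open MeasureTheory Real ENNReal

open SchwartzMap FourierTransform ContDiff

section AuxGeneric

variable {E F : Type*} [NormedAddCommGroup E] [NormedSpace ℝ E]
  [NormedAddCommGroup F] [NormedSpace ℝ F]

lemma hasTemperateGrowth_shift (c : E) :
    Function.HasTemperateGrowth (fun x : E => x + c) := by
  apply Function.HasTemperateGrowth.of_fderiv (k := 1) (C := 1 + ‖c‖)
  · have h : fderiv ℝ (fun x : E => x + c) = fun _ => ContinuousLinearMap.id ℝ E := by
      ext1 x
      rw [fderiv_add_const]; exact fderiv_id
    rw [h]
    exact Function.HasTemperateGrowth.const _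
  · exact differentiable_id.add_const c
  · intro x
    have h1 := norm_add_le x c
    have h2 : (0:ℝ) ≤ ‖x‖ := norm_nonneg x
    have h3 : (0:ℝ) ≤ ‖c‖ := norm_nonneg c
    nlinarith

lemma iteratedFDeriv_comp_add_const {f : E → F} (hf : ContDiff ℝ ∞ f) (c : E) :
    ∀ j, iteratedFDeriv ℝ j (fun x => f (x + c)) = fun x => iteratedFDeriv ℝ j f (x + c)
  | 0 => by
    funext x
    ext v
    simp [iteratedFDeriv_zero_apply]
  | (j+1) => by
    funext x
    rw [iteratedFDeriv_succ_eq_comp_left, iteratedFDeriv_succ_eq_comp_left]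
    simp only [Function.comp_apply]
    congr 1
    rw [iteratedFDeriv_comp_add_const hf c j]
    have hdiff : DifferentiableAt ℝ (iteratedFDeriv ℝ j f) (x + c) :=
      (hf.differentiable_iteratedFDeriv (by exact_mod_cast WithTop.coe_lt_top _)).differentiableAt
    have ht : HasFDerivAt (fun x : E => x + c) (ContinuousLinearMap.id ℝ E) x :=
      (hasFDerivAt_id x).add_const c
    have hc := hdiff.hasFDerivAt.comp x ht
    have hc' : HasFDerivAt (fun x : E => iteratedFDeriv ℝ j f (x + c))
        (fderiv ℝ (iteratedFDeriv ℝ j f) (x + c)) x := by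
      simpa [Function.comp_def] using hc
    rw [hc'.fderiv]

lemma schwartz_hasTemperateGrowth (f : SchwartzMap E F) : Function.HasTemperateGrowth ⇑f :=
  ⟨f.smooth', fun j => ⟨0, SchwartzMap.seminorm ℝ 0 j f, fun x => by
    simpa using SchwartzMap.norm_iteratedFDeriv_le_seminorm ℝ f j x⟩⟩

end AuxGeneric

variable {n : ℕ}

/-- `ψ := FT η` as a Schwartz map. -/
def psiS (η : SchwartzMap (En n) ℂ) : SchwartzMap (En n) ℂ :=
  SchwartzMap.compCLM (𝕜 := ℝ) (g := fun ξ : En n => (2 * π)⁻¹ • ξ)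
    (by simpa [ContinuousLinearMap.coe_smul', Pi.smul_def] using
      (((2 * π)⁻¹ : ℝ) • ContinuousLinearMap.id ℝ (En n)).hasTemperateGrowth)
    ⟨1, 2 * π, fun x => by
      have hπ : (0:ℝ) < 2 * π := by positivity
      rw [norm_smul]
      simp only [norm_inv, Real.norm_eq_abs, abs_of_pos hπ, pow_one]
      rw [mul_add, mul_one, mul_inv_cancel_left₀ hπ.ne']
      linarith [norm_nonneg x]⟩
    (fourierTransformCLM ℝ η)

lemma psiS_apply (η : SchwartzMap (En n) ℂ) (ζ : En n) : psiS η ζ = FT ⇑η ζ := by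
  have h : psiS η ζ = 𝓕 ⇑η ((2 * π)⁻¹ • ζ) := rfl
  rw [h, Real.fourier_eq']
  unfold FT
  congr 1
  funext v
  have hπ : (2 * π : ℝ) ≠ 0 := by positivity
  have hinner : (inner ℝ v ((2 * π)⁻¹ • ζ) : ℝ) = (2 * π)⁻¹ * (inner ℝ v ζ : ℝ) :=
    real_inner_smul_right v ζ _
  rw [hinner, smul_eq_mul]
  have h2 : (-2 * π * ((2 * π)⁻¹ * (inner ℝ v ζ : ℝ))) = -(inner ℝ v ζ : ℝ) := by
    field_simp
  rw [h2]
  push_cast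
  ring

def phiT (φ : SchwartzMap (En n) ℂ) (m : Zn n) : SchwartzMap (En n) ℂ :=
  SchwartzMap.compCLM (𝕜 := ℝ) (hasTemperateGrowth_shift (-(zc m)))
    ⟨1, 1 + ‖zc m‖, fun x => by
      have h1 : ‖x‖ ≤ ‖x + -zc m‖ + ‖zc m‖ := by
        calc ‖x‖ = ‖x + -zc m + zc m‖ := by rw [neg_add_cancel_right]
        _ ≤ ‖x + -zc m‖ + ‖zc m‖ := norm_add_le _ _
      have h2 : (0:ℝ) ≤ ‖x + -zc m‖ := norm_nonneg _
      have h3 : (0:ℝ) ≤ ‖zc m‖ := norm_nonneg _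
      nlinarith⟩ φ

lemma phiT_apply (φ : SchwartzMap (En n) ℂ) (m : Zn n) (ζ : En n) :
    phiT φ m ζ = φ (ζ - zc m) := by rw [sub_eq_add_neg]; rfl

def hmS (φ η : SchwartzMap (En n) ℂ) (m : Zn n) : SchwartzMap (En n) ℂ :=
  SchwartzMap.bilinLeftCLM (ContinuousLinearMap.mul ℝ ℂ)
    (schwartz_hasTemperateGrowth (phiT φ m)) (psiS η)

lemma hmS_apply (φ η : SchwartzMap (En n) ℂ) (m : Zn n) (ζ : En n) :
    hmS φ η m ζ = psiS η ζ * φ (ζ - zc m) := by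
  rw [← phiT_apply]; rfl

lemma hm_pointwise (φ η : SchwartzMap (En n) ℂ)
    (hφ : Function.support ⇑φ ⊆ {ξ : En n | ∀ i, |ξ i| ≤ 1}) (N i j : ℕ) :
    ∃ C : ℝ, 0 < C ∧ ∀ (m : Zn n) (ζ : En n),
      ‖ζ‖ ^ i * ‖iteratedFDeriv ℝ j (⇑(hmS φ η m)) ζ‖ * (1 + ‖zc m‖) ^ N ≤ C := by
  set p := schwartzSeminormFamily ℝ (En n) ℂ with hp
  set A : ℝ := ((Finset.Iic (0, j)).sup p) φ with hA
  set S : ℝ := 2 ^ (i + N) * ((Finset.Iic (i + N, j)).sup p) (psiS η) with hS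
  have hA0 : 0 ≤ A := apply_nonneg _ _
  have hS0 : 0 ≤ S := by positivity
  refine ⟨2 ^ j * (A + 1) * (S + 1) * (1 + Real.sqrt n) ^ N, by positivity, fun m ζ => ?_⟩
  by_cases hcase : ∀ i0 : Fin n, |ζ i0 - (m i0 : ℝ)| ≤ 1
  · -- main case
    have hsqrtn : (0:ℝ) ≤ Real.sqrt n := Real.sqrt_nonneg _
    have hsub : ‖ζ - zc m‖ ≤ Real.sqrt n := by
      rw [EuclideanSpace.norm_eq]
      refine Real.sqrt_le_sqrt ?_
      calc (∑ i0, ‖(ζ - zc m) i0‖ ^ 2) ≤ ∑ _i0 : Fin n, (1:ℝ) := by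
            refine Finset.sum_le_sum fun i0 _ => ?_
            have h1 : ‖(ζ - zc m) i0‖ ≤ 1 := by
              have : (ζ - zc m) i0 = ζ i0 - (m i0 : ℝ) := by simp [zc]
              rw [this, Real.norm_eq_abs]
              exact hcase i0
            nlinarith [norm_nonneg ((ζ - zc m) i0)]
        _ = (n : ℝ) := by simp
    set t : ℝ := 1 + ‖ζ‖ with ht
    have ht1 : (1:ℝ) ≤ t := by simp [ht, norm_nonneg]
    have ht0 : (0:ℝ) < t := by linarith
    have hmm : 1 + ‖zc m‖ ≤ (1 + Real.sqrt n) * t := by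
      have h1 : ‖zc m‖ ≤ ‖ζ‖ + Real.sqrt n := by
        calc ‖zc m‖ = ‖ζ - (ζ - zc m)‖ := by rw [_root_.sub_sub_cancel]
          _ ≤ ‖ζ‖ + ‖ζ - zc m‖ := norm_sub_le _ _
          _ ≤ ‖ζ‖ + Real.sqrt n := by linarith
      have h2 : (0:ℝ) ≤ ‖ζ‖ := norm_nonneg _
      rw [ht]; nlinarith
    -- derivative bounds
    have hψb : ∀ b, b ≤ j → ‖iteratedFDeriv ℝ b (⇑(psiS η)) ζ‖ * t ^ (i + N) ≤ S := by
      intro b hb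
      have h := SchwartzMap.one_add_le_sup_seminorm_apply (𝕜 := ℝ) (m := (i + N, j))
        le_rfl hb (psiS η) ζ
      rw [hS]; rw [mul_comm]; exact h
    have hφb : ∀ b, b ≤ j → ∀ u : En n, ‖iteratedFDeriv ℝ b (⇑φ) u‖ ≤ A := by
      intro b hb u
      have h := SchwartzMap.one_add_le_sup_seminorm_apply (𝕜 := ℝ) (m := (0, j))
        le_rfl hb φ u
      simp only [pow_zero, one_mul] at h
      exact h
    have htrans := iteratedFDeriv_comp_add_const (f := ⇑φ) (φ.smooth ⊤) (-zc m)
    have hcoe : ⇑(hmS φ η m) = fun ζ' => psiS η ζ' * φ (ζ' + -zc m) := by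
      funext ζ'
      rw [hmS_apply, sub_eq_add_neg]
    have hg : ContDiff ℝ ∞ (fun ζ' : En n => φ (ζ' + -zc m)) :=
      (φ.smooth ⊤).comp (contDiff_id.add contDiff_const)
    have hmul := norm_iteratedFDeriv_mul_le (𝕜 := ℝ) (f := ⇑(psiS η))
      (g := fun ζ' : En n => φ (ζ' + -zc m)) ((psiS η).smooth ⊤) hg ζ
      (n := j) (by exact_mod_cast le_top)
    rw [hcoe]
    have hterm : ∀ b ∈ Finset.range (j + 1),
        ((j.choose b : ℝ) * ‖iteratedFDeriv ℝ b (⇑(psiS η)) ζ‖ *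
          ‖iteratedFDeriv ℝ (j - b) (fun ζ' : En n => φ (ζ' + -zc m)) ζ‖) * t ^ (i + N)
          ≤ (j.choose b : ℝ) * S * A := by
      intro b hb
      rw [Finset.mem_range] at hb
      have hb' : b ≤ j := Nat.lt_succ_iff.mp hb
      have e1 : ‖iteratedFDeriv ℝ (j - b) (fun ζ' : En n => φ (ζ' + -zc m)) ζ‖
          = ‖iteratedFDeriv ℝ (j - b) (⇑φ) (ζ + -zc m)‖ := by rw [htrans (j - b)]
      rw [e1]
      have h2 := hψb b hb'
      have h3 := hφb (j - b) (Nat.sub_le j b) (ζ + -zc m)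
      have hc0 : (0:ℝ) ≤ (j.choose b : ℝ) := Nat.cast_nonneg _
      have h4 : (0:ℝ) ≤ ‖iteratedFDeriv ℝ b (⇑(psiS η)) ζ‖ := norm_nonneg _
      have h5 : (0:ℝ) ≤ ‖iteratedFDeriv ℝ (j - b) (⇑φ) (ζ + -zc m)‖ := norm_nonneg _
      have h6 : (0:ℝ) ≤ t ^ (i + N) := by positivity
      calc (j.choose b : ℝ) * ‖iteratedFDeriv ℝ b (⇑(psiS η)) ζ‖ *
          ‖iteratedFDeriv ℝ (j - b) (⇑φ) (ζ + -zc m)‖ * t ^ (i + N)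
          = (j.choose b : ℝ) * (‖iteratedFDeriv ℝ b (⇑(psiS η)) ζ‖ * t ^ (i + N)) *
            ‖iteratedFDeriv ℝ (j - b) (⇑φ) (ζ + -zc m)‖ := by ring
        _ ≤ (j.choose b : ℝ) * S * A := by
            apply mul_le_mul
            · exact mul_le_mul_of_nonneg_left h2 hc0
            · exact h3
            · exact h5
            · positivity
    -- assemble
    have hsum : ‖iteratedFDeriv ℝ j (fun ζ' : En n => psiS η ζ' * φ (ζ' + -zc m)) ζ‖ *
        t ^ (i + N) ≤ 2 ^ j * S * A := by
      calc ‖iteratedFDeriv ℝ j (fun ζ' : En n => psiS η ζ' * φ (ζ' + -zc m)) ζ‖ * t ^ (i + N)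
          ≤ (∑ b ∈ Finset.range (j + 1), (j.choose b : ℝ) *
              ‖iteratedFDeriv ℝ b (⇑(psiS η)) ζ‖ *
              ‖iteratedFDeriv ℝ (j - b) (fun ζ' : En n => φ (ζ' + -zc m)) ζ‖) * t ^ (i + N) := by
            have h6 : (0:ℝ) ≤ t ^ (i + N) := by positivity
            exact mul_le_mul_of_nonneg_right hmul h6
        _ = ∑ b ∈ Finset.range (j + 1), ((j.choose b : ℝ) *
              ‖iteratedFDeriv ℝ b (⇑(psiS η)) ζ‖ *
              ‖iteratedFDeriv ℝ (j - b) (fun ζ' : En n => φ (ζ' + -zc m)) ζ‖) * t ^ (i + N) :=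
            Finset.sum_mul ..
        _ ≤ ∑ b ∈ Finset.range (j + 1), (j.choose b : ℝ) * S * A :=
            Finset.sum_le_sum hterm
        _ = (∑ b ∈ Finset.range (j + 1), (j.choose b : ℝ)) * S * A := by
            rw [← Finset.sum_mul, ← Finset.sum_mul]
        _ = 2 ^ j * S * A := by
            norm_cast
            rw [Nat.sum_range_choose]
    have hD0 : (0:ℝ) ≤ ‖iteratedFDeriv ℝ j (fun ζ' : En n => psiS η ζ' * φ (ζ' + -zc m)) ζ‖ :=
      norm_nonneg _
    calc ‖ζ‖ ^ i * ‖iteratedFDeriv ℝ j (fun ζ' : En n => psiS η ζ' * φ (ζ' + -zc m)) ζ‖ *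
        (1 + ‖zc m‖) ^ N
        ≤ t ^ i * ‖iteratedFDeriv ℝ j (fun ζ' : En n => psiS η ζ' * φ (ζ' + -zc m)) ζ‖ *
          ((1 + Real.sqrt n) * t) ^ N := by
          apply mul_le_mul
          · apply mul_le_mul_of_nonneg_right _ hD0
            apply pow_le_pow_left₀ (norm_nonneg _) (by linarith [norm_nonneg ζ])
          · apply pow_le_pow_left₀ (by positivity) hmm
          · positivity
          · positivity
      _ = (1 + Real.sqrt n) ^ N * (‖iteratedFDeriv ℝ j
            (fun ζ' : En n => psiS η ζ' * φ (ζ' + -zc m)) ζ‖ * t ^ (i + N)) := by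
          rw [mul_pow, pow_add]; ring
      _ ≤ (1 + Real.sqrt n) ^ N * (2 ^ j * S * A) := by
          apply mul_le_mul_of_nonneg_left hsum (by positivity)
      _ ≤ (1 + Real.sqrt n) ^ N * (2 ^ j * (A + 1) * (S + 1)) := by
          have h9 : (0:ℝ) < 2 ^ j := by positivity
          have h8 : 2 ^ j * S * A ≤ 2 ^ j * (A + 1) * (S + 1) := by nlinarith [h9, hS0, hA0]
          exact mul_le_mul_of_nonneg_left h8 (by positivity)
      _ = 2 ^ j * (A + 1) * (S + 1) * (1 + Real.sqrt n) ^ N := by ring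
  · -- support case : derivative vanishes
    push_neg at hcase
    obtain ⟨i0, hi0⟩ := hcase
    have hopen : IsOpen {ζ' : En n | 1 < |ζ' i0 - (m i0 : ℝ)|} := by
      have hcont : Continuous fun ζ' : En n => |ζ' i0 - (m i0 : ℝ)| :=
        ((EuclideanSpace.proj (𝕜 := ℝ) i0).continuous.sub continuous_const).abs
      exact isOpen_lt continuous_const hcont
    have hmem : {ζ' : En n | 1 < |ζ' i0 - (m i0 : ℝ)|} ∈ nhds ζ :=
      hopen.mem_nhds hi0
    have hev : ⇑(hmS φ η m) =ᶠ[nhds ζ] (fun _ => (0:ℂ)) := by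
      filter_upwards [hmem] with ζ' hζ'
      rw [hmS_apply]
      have hz : φ (ζ' - zc m) = 0 := by
        by_contra hne
        have hmem2 := hφ (Function.mem_support.2 hne) i0
        have he : (ζ' - zc m) i0 = ζ' i0 - (m i0 : ℝ) := by simp [zc]
        rw [he] at hmem2
        exact absurd hmem2 (not_le.2 hζ')
      rw [hz, mul_zero]
    have hzero : iteratedFDeriv ℝ j (⇑(hmS φ η m)) ζ = 0 := by
      have heq : iteratedFDeriv ℝ j (⇑(hmS φ η m)) ζ =
          iteratedFDeriv ℝ j (fun _ : En n => (0:ℂ)) ζ := by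
        rw [← iteratedFDerivWithin_univ, ← iteratedFDerivWithin_univ]
        exact Filter.EventuallyEq.iteratedFDerivWithin_eq
          (by rwa [nhdsWithin_univ]) hev.self_of_nhds j
      rw [heq, iteratedFDeriv_zero_fun]
      rfl
    rw [hzero]
    simp only [norm_zero, mul_zero, zero_mul]
    positivity

lemma hm_sup_bound (φ η : SchwartzMap (En n) ℂ)
    (hφ : Function.support ⇑φ ⊆ {ξ : En n | ∀ i, |ξ i| ≤ 1}) (N : ℕ) (s : Finset (ℕ × ℕ)) :
    ∃ D : ℝ, 0 < D ∧ ∀ m : Zn n,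
      ((s.sup (schwartzSeminormFamily ℝ (En n) ℂ)) (hmS φ η m)) ≤ D / (1 + ‖zc m‖) ^ N := by
  have h := fun ij : ℕ × ℕ => hm_pointwise φ η hφ N ij.1 ij.2
  choose Cf hCf0 hCf using h
  have hsum0 : (0:ℝ) ≤ ∑ ij ∈ s, Cf ij := Finset.sum_nonneg fun ij _ => (hCf0 ij).le
  refine ⟨(∑ ij ∈ s, Cf ij) + 1, by linarith, fun m => ?_⟩
  have hw : (0:ℝ) < (1 + ‖zc m‖) ^ N := by positivity
  apply Seminorm.finset_sup_apply_le (div_nonneg (by linarith) hw.le)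
  intro ij hij
  have h1 : SchwartzMap.seminorm ℝ ij.1 ij.2 (hmS φ η m) ≤ Cf ij / (1 + ‖zc m‖) ^ N := by
    apply SchwartzMap.seminorm_le_bound ℝ ij.1 ij.2 (hmS φ η m) (div_nonneg (hCf0 ij).le hw.le)
    intro ζ
    rw [le_div_iff₀ hw]
    exact hCf ij m ζ
  have h2 : Cf ij ≤ (∑ ij' ∈ s, Cf ij') + 1 := by
    have := Finset.single_le_sum (f := Cf) (fun ij' _ => (hCf0 ij').le) hij
    linarith
  calc (schwartzSeminormFamily ℝ (En n) ℂ) ij (hmS φ η m)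
      = SchwartzMap.seminorm ℝ ij.1 ij.2 (hmS φ η m) := by
        rw [← schwartzSeminormFamily_apply]
    _ ≤ Cf ij / (1 + ‖zc m‖) ^ N := h1
    _ ≤ ((∑ ij' ∈ s, Cf ij') + 1) / (1 + ‖zc m‖) ^ N := by
        gcongr

lemma ft_decay (φ η : SchwartzMap (En n) ℂ)
    (hφ : Function.support ⇑φ ⊆ {ξ : En n | ∀ i, |ξ i| ≤ 1}) (N : ℕ) :
    ∃ C : ℝ, 0 < C ∧ ∀ (m : Zn n) (w : En n),
      ‖𝓕 ⇑(hmS φ η m) w‖ * ((1 + ‖w‖) ^ N * (1 + ‖zc m‖) ^ N) ≤ C := by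
  set p := schwartzSeminormFamily ℝ (En n) ℂ with hpdef
  set T := fourierTransformCLM ℝ (V := En n) (E := ℂ) with hT
  have hws := schwartz_withSeminorms ℝ (En n) ℂ
  have hb : ∀ ij : ℕ × ℕ, ∃ (s : Finset (ℕ × ℕ)) (C : NNReal), C ≠ 0 ∧
      (p ij).comp T.toLinearMap ≤ C • s.sup p := by
    intro ij
    have hcont : Continuous ⇑((p ij).comp T.toLinearMap) := by
      have h1 : ⇑((p ij).comp T.toLinearMap) = fun f => p ij (T f) := rfl
      rw [h1]
      exact (hws.continuous_seminorm ij).comp T.continuous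
    exact Seminorm.bound_of_continuous hws _ hcont
  choose sF CF hCF0 hCFle using hb
  have hd := fun ij : ℕ × ℕ => hm_sup_bound φ η hφ N (sF ij)
  choose DF hDF0 hDF using hd
  have hsum0 : (0:ℝ) ≤ ∑ ij ∈ Finset.Iic ((N:ℕ), (0:ℕ)), (CF ij : ℝ) * DF ij :=
    Finset.sum_nonneg fun ij _ => mul_nonneg (CF ij).coe_nonneg (hDF0 ij).le
  refine ⟨2 ^ N * ((∑ ij ∈ Finset.Iic ((N:ℕ), (0:ℕ)), (CF ij : ℝ) * DF ij) + 1),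
    by positivity, fun m w => ?_⟩
  have hw : (0:ℝ) < (1 + ‖zc m‖) ^ N := by positivity
  have hTm : 𝓕 ⇑(hmS φ η m) = ⇑(T (hmS φ η m)) := by
    rw [hT, SchwartzMap.fourierTransformCLM_apply]
    exact (SchwartzMap.fourier_coe _).symm
  have h1 : (1 + ‖w‖) ^ N * ‖(T (hmS φ η m)) w‖ ≤
      2 ^ N * ((Finset.Iic ((N:ℕ), (0:ℕ))).sup p) (T (hmS φ η m)) := by
    have h := SchwartzMap.one_add_le_sup_seminorm_apply (𝕜 := ℝ) (m := ((N:ℕ), (0:ℕ)))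
      le_rfl le_rfl (T (hmS φ η m)) w
    simp only [norm_iteratedFDeriv_zero] at h
    exact h
  have h2 : ((Finset.Iic ((N:ℕ), (0:ℕ))).sup p) (T (hmS φ η m)) ≤
      ((∑ ij ∈ Finset.Iic ((N:ℕ), (0:ℕ)), (CF ij : ℝ) * DF ij) + 1) / (1 + ‖zc m‖) ^ N := by
    apply Seminorm.finset_sup_apply_le (div_nonneg (by linarith) hw.le)
    intro ij hij
    have h3 : p ij (T (hmS φ η m)) ≤ (CF ij : ℝ) * ((sF ij).sup p) (hmS φ η m) := by
      have h4 := Seminorm.le_def.mp (hCFle ij) (hmS φ η m)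
      rw [Seminorm.comp_apply] at h4
      simpa [NNReal.smul_def] using h4
    have h5 : (CF ij : ℝ) * ((sF ij).sup p) (hmS φ η m) ≤
        (CF ij : ℝ) * (DF ij / (1 + ‖zc m‖) ^ N) :=
      mul_le_mul_of_nonneg_left (hDF ij m) (CF ij).coe_nonneg
    have h6 : (CF ij : ℝ) * DF ij ≤ (∑ ij' ∈ Finset.Iic ((N:ℕ), (0:ℕ)), (CF ij' : ℝ) * DF ij') + 1 := by
      have h7 : (CF ij : ℝ) * DF ij ≤ ∑ ij' ∈ Finset.Iic ((N:ℕ), (0:ℕ)), (CF ij' : ℝ) * DF ij' :=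
        Finset.single_le_sum (f := fun ij' => (CF ij' : ℝ) * DF ij')
          (fun ij' _ => mul_nonneg (CF ij').coe_nonneg (hDF0 ij').le) hij
      linarith
    calc p ij (T (hmS φ η m)) ≤ (CF ij : ℝ) * (DF ij / (1 + ‖zc m‖) ^ N) := le_trans h3 h5
      _ = ((CF ij : ℝ) * DF ij) / (1 + ‖zc m‖) ^ N := by ring
      _ ≤ _ := by gcongr
  calc ‖𝓕 ⇑(hmS φ η m) w‖ * ((1 + ‖w‖) ^ N * (1 + ‖zc m‖) ^ N)
      = ((1 + ‖w‖) ^ N * ‖(T (hmS φ η m)) w‖) * (1 + ‖zc m‖) ^ N := by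
        rw [hTm]; ring
    _ ≤ (2 ^ N * ((Finset.Iic ((N:ℕ), (0:ℕ))).sup p) (T (hmS φ η m))) * (1 + ‖zc m‖) ^ N :=
        mul_le_mul_of_nonneg_right h1 hw.le
    _ ≤ (2 ^ N * (((∑ ij ∈ Finset.Iic ((N:ℕ), (0:ℕ)), (CF ij : ℝ) * DF ij) + 1) /
          (1 + ‖zc m‖) ^ N)) * (1 + ‖zc m‖) ^ N := by
        have : (0:ℝ) ≤ (2:ℝ) ^ N := by positivity
        apply mul_le_mul_of_nonneg_right (mul_le_mul_of_nonneg_left h2 this) hw.le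
    _ = 2 ^ N * ((∑ ij ∈ Finset.Iic ((N:ℕ), (0:ℕ)), (CF ij : ℝ) * DF ij) + 1) := by
        field_simp

/-- Estimate (3.2.2): the oscillatory integral bound
`|∫ e^{i(x-ℓ)·ξ} φ(ξ-k) η̂(ξ-ℓ) dξ| ≤ C_N (1+|x-ℓ|)^{-N} (1+|k-ℓ|)^{-N}`. -/
theorem oscillatory_integral_decay
    (n : ℕ) (hn : 1 ≤ n) (φ η : SchwartzMap (En n) ℂ)
    (hφ : Function.support ⇑φ ⊆ {ξ : En n | ∀ i, |ξ i| ≤ 1})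
    (hη : Function.support ⇑η ⊆ {x : En n | ∀ i, |x i| ≤ 1 / 2}) :
    ∀ N : ℕ, 1 ≤ N → ∃ C : ℝ, 0 < C ∧ ∀ (x : En n) (k l : Zn n),
      ‖∫ ξ : En n,
          Complex.exp (Complex.I * ((inner ℝ (x - zc l) ξ : ℝ) : ℂ)) *
            φ (ξ - zc k) * FT ⇑η (ξ - zc l)‖ ≤
        C * (1 + ‖x - zc l‖) ^ (-(N : ℝ)) * (1 + ‖zc (k - l)‖) ^ (-(N : ℝ)) := by
  intro N hN
  obtain ⟨C, hC0, hC⟩ := ft_decay φ η hφ N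
  have hπ1 : (1:ℝ) ≤ 2 * π := by nlinarith [Real.pi_gt_three]
  have hπ0 : (0:ℝ) < 2 * π := by linarith
  refine ⟨C * (2 * π) ^ N, by positivity, fun x k l => ?_⟩
  set y : En n := x - zc l with hy
  set m : Zn n := k - l with hm
  set w : En n := -((2 * π)⁻¹ • y) with hw
  have hzc : zc m = zc k - zc l := by
    ext i
    have h1 : (zc k - zc l) i = zc k i - zc l i := PiLp.sub_apply ..
    rw [h1]
    simp only [zc, hm, Pi.sub_apply, PiLp.toLp_apply]
    push_cast
    ring
  have key : (∫ ξ : En n, Complex.exp (Complex.I * ((inner ℝ y ξ : ℝ) : ℂ)) *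
        φ (ξ - zc k) * FT ⇑η (ξ - zc l)) =
      Complex.exp (Complex.I * ((inner ℝ y (zc l) : ℝ) : ℂ)) * 𝓕 ⇑(hmS φ η m) w := by
    rw [← MeasureTheory.integral_add_right_eq_self (μ := volume) (fun ξ : En n =>
      Complex.exp (Complex.I * ((inner ℝ y ξ : ℝ) : ℂ)) *
        φ (ξ - zc k) * FT ⇑η (ξ - zc l)) (zc l)]
    rw [Real.fourier_eq', ← MeasureTheory.integral_const_mul]
    congr 1
    funext ζ
    have e1 : ζ + zc l - zc l = ζ := add_sub_cancel_right ζ (zc l)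
    have e2 : ζ + zc l - zc k = ζ - zc m := by rw [hzc]; abel
    have e3 : (inner ℝ y (ζ + zc l) : ℝ) = (inner ℝ y ζ : ℝ) + (inner ℝ y (zc l) : ℝ) :=
      inner_add_right y ζ (zc l)
    have e4 : (-2 * π * (inner ℝ ζ w : ℝ)) = (inner ℝ y ζ : ℝ) := by
      rw [hw, inner_neg_right, real_inner_smul_right]
      rw [real_inner_comm]
      field_simp
    simp only [e1, e2, e3]
    rw [e4, hmS_apply, psiS_apply, smul_eq_mul]
    push_cast
    rw [mul_add, Complex.exp_add]
    ring
  rw [key, norm_mul]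
  have hexp1 : ‖Complex.exp (Complex.I * ((inner ℝ y (zc l) : ℝ) : ℂ))‖ = 1 := by
    rw [mul_comm, Complex.norm_exp_ofReal_mul_I]
  rw [hexp1, one_mul]
  have hb := hC m w
  have hwn : ‖w‖ = (2 * π)⁻¹ * ‖y‖ := by
    rw [hw, norm_neg, norm_smul, Real.norm_eq_abs, abs_of_pos (by positivity)]
  have hY : (1 + ‖y‖) ^ N ≤ (2 * π) ^ N * (1 + ‖w‖) ^ N := by
    rw [← mul_pow]
    apply pow_le_pow_left₀ (by positivity)
    rw [hwn]
    have h0y : (0:ℝ) ≤ ‖y‖ := norm_nonneg _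
    have : 2 * π * (1 + (2 * π)⁻¹ * ‖y‖) = 2 * π + ‖y‖ := by
      field_simp
    rw [this]
    linarith
  have hQ0 : (0:ℝ) < (1 + ‖zc m‖) ^ N := by positivity
  have hY0 : (0:ℝ) < (1 + ‖y‖) ^ N := by positivity
  have h2 : ‖𝓕 ⇑(hmS φ η m) w‖ * ((1 + ‖y‖) ^ N * (1 + ‖zc m‖) ^ N) ≤ C * (2 * π) ^ N := by
    calc ‖𝓕 ⇑(hmS φ η m) w‖ * ((1 + ‖y‖) ^ N * (1 + ‖zc m‖) ^ N)
        ≤ ‖𝓕 ⇑(hmS φ η m) w‖ * (((2 * π) ^ N * (1 + ‖w‖) ^ N) * (1 + ‖zc m‖) ^ N) := by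
          gcongr
      _ = (2 * π) ^ N * (‖𝓕 ⇑(hmS φ η m) w‖ * ((1 + ‖w‖) ^ N * (1 + ‖zc m‖) ^ N)) := by ring
      _ ≤ (2 * π) ^ N * C := by
          apply mul_le_mul_of_nonneg_left hb (by positivity)
      _ = C * (2 * π) ^ N := by ring
  have h3 : ‖𝓕 ⇑(hmS φ η m) w‖ ≤
      (C * (2 * π) ^ N) / ((1 + ‖y‖) ^ N * (1 + ‖zc m‖) ^ N) := by
    rw [le_div_iff₀ (by positivity)]
    exact h2
  calc ‖𝓕 ⇑(hmS φ η m) w‖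
      ≤ (C * (2 * π) ^ N) / ((1 + ‖y‖) ^ N * (1 + ‖zc m‖) ^ N) := h3
    _ = C * (2 * π) ^ N * (1 + ‖y‖) ^ (-(N : ℝ)) * (1 + ‖zc m‖) ^ (-(N : ℝ)) := by
        rw [Real.rpow_neg (by positivity), Real.rpow_neg (by positivity),
          Real.rpow_natCast, Real.rpow_natCast]
        rw [div_eq_mul_inv, mul_inv]
        ring
end
end
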